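/- Let g_s denote the heat kernel on ℝ and φ₁ a bounded function satisfying |φ₁(x)| ≤ C_N (1+x²)^{-N/2} for some N ≥ 3 and constant C_N. Then there is a constant C such that for all s > 0 and x ∈ ℝ: (g_s ⋆ φ₁)²(x) ≤ C·( e^{-x²/(16s)}/√(1+s²) + (1+x²)^{-N/2} ). -/
import Mathlib

open MeasureTheory
set_option maxHeartbeats 1000000

theorem stmt14 (φ₁ : ℝ → ℂ) (N C_N : ℝ) (hN : 3 ≤ N) (hC : 0 ≤ C_N)
    (hmeas : Measurable φ₁)
    (hφ : ∀ x : ℝ, ‖φ₁ x‖ ≤ C_N * (1 + x ^ 2) ^ (-(N / 2))) :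
    ∃ C > 0, ∀ s : ℝ, 0 < s → ∀ x : ℝ,
      ‖∫ y, (((4 * Real.pi * s) ^ (-(1 : ℝ) / 2) * Real.exp (-(x - y) ^ 2 / (4 * s)) : ℝ)) • φ₁ y‖ ^ 2 ≤
        C * (Real.exp (-x ^ 2 / (16 * s)) / Real.sqrt (1 + s ^ 2) + (1 + x ^ 2) ^ (-(N / 2))) := by
  have pi_pos := Real.pi_pos
  have two_sq : ∀ a b : ℝ, (a + b) ^ 2 ≤ 2 * a ^ 2 + 2 * b ^ 2 := fun a b => by
    nlinarith [sq_nonneg (a - b)]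
  have exp_le_one : ∀ t : ℝ, t ≤ 0 → Real.exp t ≤ 1 := fun t ht => by
    simpa using Real.exp_le_exp.mpr ht
  set M : ℝ := (4 : ℝ) ^ (N / 2 : ℝ) with hM
  have hM1 : (1 : ℝ) ≤ M := by
    calc (1 : ℝ) = (4 : ℝ) ^ (0 : ℝ) := (Real.rpow_zero 4).symm
      _ ≤ (4 : ℝ) ^ (N / 2 : ℝ) := Real.rpow_le_rpow_of_exponent_le (by norm_num) (by linarith)
  set B : ℝ := C_N * M with hB
  have hB0 : 0 ≤ B := mul_nonneg hC (by linarith)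
  -- bound φ₁ by an integrable function
  have hone_le : ∀ y : ℝ, (1 : ℝ) ≤ 1 + y ^ 2 := fun y => by nlinarith [sq_nonneg y]
  have hrpow_le_one : ∀ y : ℝ, ((1 : ℝ) + y ^ 2) ^ (-(N / 2)) ≤ 1 := fun y =>
    Real.rpow_le_one_of_one_le_of_nonpos (hone_le y) (by linarith)
  have hφCN : ∀ y : ℝ, ‖φ₁ y‖ ≤ C_N := fun y =>
    (hφ y).trans (by nlinarith [hrpow_le_one y, Real.rpow_nonneg (by positivity : (0:ℝ) ≤ 1 + y ^ 2) (-(N/2))])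
  have hbound : ∀ y : ℝ, ‖φ₁ y‖ ≤ C_N * (1 + y ^ 2)⁻¹ := by
    intro y
    refine (hφ y).trans (mul_le_mul_of_nonneg_left ?_ hC)
    calc ((1 : ℝ) + y ^ 2) ^ (-(N / 2)) ≤ (1 + y ^ 2) ^ (-1 : ℝ) :=
          Real.rpow_le_rpow_of_exponent_le (hone_le y) (by linarith)
      _ = (1 + y ^ 2)⁻¹ := Real.rpow_neg_one _
  have hint1 : Integrable (fun y : ℝ => C_N * (1 + y ^ 2)⁻¹) :=
    integrable_inv_one_add_sq.const_mul C_N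
  have hφint : Integrable φ₁ :=
    hint1.mono' hmeas.aestronglyMeasurable (Filter.Eventually.of_forall hbound)
  have hφnorm : ∫ y, ‖φ₁ y‖ ≤ C_N * Real.pi := by
    calc ∫ y, ‖φ₁ y‖ ≤ ∫ y : ℝ, C_N * (1 + y ^ 2)⁻¹ :=
          integral_mono hφint.norm hint1 hbound
      _ = C_N * Real.pi := by rw [integral_const_mul, integral_univ_inv_one_add_sq]
  refine ⟨8 * C_N ^ 2 + 2 * B ^ 2 + 1, by positivity, ?_⟩
  intro s hs x
  have h4s : (0 : ℝ) < 4 * Real.pi * s := by positivity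
  set r : ℝ := (4 * Real.pi * s) ^ (-(1 : ℝ) / 2) with hrdef
  have hr : r = (Real.sqrt (4 * Real.pi * s))⁻¹ := by
    rw [hrdef, Real.sqrt_eq_rpow, show (-(1 : ℝ) / 2) = -(1 / 2 : ℝ) by norm_num,
      Real.rpow_neg h4s.le]
  have hsq0 : 0 < Real.sqrt (4 * Real.pi * s) := Real.sqrt_pos.mpr h4s
  have hrpos : 0 ≤ r := by rw [hr]; positivity
  set P : ℝ := (1 + x ^ 2) ^ (-(N / 2)) with hP
  have hP0 : 0 ≤ P := Real.rpow_nonneg (by positivity) _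
  have hP1 : P ≤ 1 := hrpow_le_one x
  set E : ℝ := Real.exp (-x ^ 2 / (16 * s)) with hE
  have hE0 : 0 < E := Real.exp_pos _
  have hE1 : E ≤ 1 := exp_le_one _ (by
    have h0 : 0 ≤ x ^ 2 / (16 * s) := by positivity
    rw [neg_div]; linarith)
  -- gaussian integrability and values
  have gauss_int : ∀ b : ℝ, 0 < b → Integrable (fun y : ℝ => Real.exp (-(x - y) ^ 2 / b)) := by
    intro b hb
    have h := (integrable_exp_neg_mul_sq (b := b⁻¹) (by positivity)).comp_sub_left x
    have he : (fun y : ℝ => Real.exp (-(x - y) ^ 2 / b)) =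
        fun y : ℝ => Real.exp (-b⁻¹ * (x - y) ^ 2) := by
      funext y; congr 1; field_simp
    rw [he]; exact h
  have gauss_val : ∀ b : ℝ, 0 < b →
      ∫ y : ℝ, Real.exp (-(x - y) ^ 2 / b) = Real.sqrt (Real.pi * b) := by
    intro b hb
    calc ∫ y : ℝ, Real.exp (-(x - y) ^ 2 / b)
        = ∫ y : ℝ, Real.exp (-b⁻¹ * (x - y) ^ 2) := by
          congr 1; funext y; congr 1; field_simp
      _ = ∫ y : ℝ, Real.exp (-b⁻¹ * y ^ 2) :=
          integral_sub_left_eq_self (fun y : ℝ => Real.exp (-b⁻¹ * y ^ 2)) volume x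
      _ = Real.sqrt (Real.pi / b⁻¹) := integral_gaussian _
      _ = Real.sqrt (Real.pi * b) := by rw [div_inv_eq_mul]
  have hr4 : r * Real.sqrt (Real.pi * (4 * s)) = 1 := by
    rw [hr, show Real.pi * (4 * s) = 4 * Real.pi * s by ring]
    exact inv_mul_cancel₀ (ne_of_gt hsq0)
  have hr8 : r * Real.sqrt (Real.pi * (8 * s)) = Real.sqrt 2 := by
    rw [hr, show Real.pi * (8 * s) = 2 * (4 * Real.pi * s) by ring,
      Real.sqrt_mul (by norm_num : (0:ℝ) ≤ 2)]
    rw [mul_comm (Real.sqrt 2), ← mul_assoc, inv_mul_cancel₀ (ne_of_gt hsq0), one_mul]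
  -- dichotomy
  have dich : ∀ y : ℝ, x ^ 2 / 4 ≤ (x - y) ^ 2 ∨ x ^ 2 / 4 ≤ y ^ 2 := by
    intro y
    by_contra h
    push_neg at h
    nlinarith [h.1, h.2, sq_nonneg (x - 2 * y)]
  -- second-region bound
  have hφ2 : ∀ y : ℝ, x ^ 2 / 4 ≤ y ^ 2 → ‖φ₁ y‖ ≤ B * P := by
    intro y hy
    refine (hφ y).trans ?_
    have h4 : ((1 : ℝ) + x ^ 2) / 4 ≤ 1 + y ^ 2 := by nlinarith [sq_nonneg y]
    have hmon : ((1 : ℝ) + y ^ 2) ^ (-(N / 2)) ≤ (((1 : ℝ) + x ^ 2) / 4) ^ (-(N / 2)) :=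
      Real.rpow_le_rpow_of_nonpos (by positivity) h4 (by linarith)
    have heq : (((1 : ℝ) + x ^ 2) / 4) ^ (-(N / 2)) = M * P := by
      rw [Real.div_rpow (by positivity) (by norm_num : (0:ℝ) ≤ 4),
        Real.rpow_neg (by norm_num : (0:ℝ) ≤ 4), div_inv_eq_mul, hP, hM, mul_comm]
    calc C_N * ((1 : ℝ) + y ^ 2) ^ (-(N / 2)) ≤ C_N * (M * P) := by
          rw [← heq]; exact mul_le_mul_of_nonneg_left hmon hC
      _ = B * P := by rw [hB]; ring
  -- norm of the integrand
  have hnorm_eq : ∀ y : ℝ, ‖(r * Real.exp (-(x - y) ^ 2 / (4 * s))) • φ₁ y‖ =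
      r * Real.exp (-(x - y) ^ 2 / (4 * s)) * ‖φ₁ y‖ := by
    intro y
    rw [norm_smul, Real.norm_eq_abs,
      abs_of_nonneg (mul_nonneg hrpos (Real.exp_nonneg _))]
  have hexp_meas : Measurable (fun y : ℝ => Real.exp (-(x - y) ^ 2 / (4 * s))) := by fun_prop
  have hcφ_int : Integrable (fun y : ℝ => r * Real.exp (-(x - y) ^ 2 / (4 * s)) * ‖φ₁ y‖) := by
    refine (hφint.norm.const_mul r).mono'
      (((measurable_const.mul hexp_meas).mul hmeas.norm).aestronglyMeasurable) ?_
    filter_upwards with y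
    rw [Real.norm_eq_abs, abs_of_nonneg
      (mul_nonneg (mul_nonneg hrpos (Real.exp_nonneg _)) (norm_nonneg _))]
    have hle1 : Real.exp (-(x - y) ^ 2 / (4 * s)) ≤ 1 := exp_le_one _ (by
      have h0 : 0 ≤ (x - y) ^ 2 / (4 * s) := by positivity
      rw [neg_div]; linarith)
    exact mul_le_mul_of_nonneg_right (mul_le_of_le_one_right hrpos hle1) (norm_nonneg _)
  have hIbase : ‖∫ y, (r * Real.exp (-(x - y) ^ 2 / (4 * s))) • φ₁ y‖ ≤
      ∫ y, r * Real.exp (-(x - y) ^ 2 / (4 * s)) * ‖φ₁ y‖ := by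
    refine (norm_integral_le_integral_norm _).trans ?_
    apply le_of_eq
    congr 1; funext y; exact hnorm_eq y
  -- bound A (good for small s)
  have boundA : ‖∫ y, (r * Real.exp (-(x - y) ^ 2 / (4 * s))) • φ₁ y‖ ≤
      Real.sqrt 2 * C_N * Real.exp (-x ^ 2 / (32 * s)) + B * P := by
    set e32 : ℝ := Real.exp (-x ^ 2 / (32 * s)) with he32
    have hFA_int : Integrable (fun y : ℝ =>
        C_N * e32 * r * Real.exp (-(x - y) ^ 2 / (8 * s)) +
        B * P * r * Real.exp (-(x - y) ^ 2 / (4 * s))) :=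
      ((gauss_int (8 * s) (by positivity)).const_mul _).add
        ((gauss_int (4 * s) (by positivity)).const_mul _)
    have hpt : ∀ y : ℝ, r * Real.exp (-(x - y) ^ 2 / (4 * s)) * ‖φ₁ y‖ ≤
        C_N * e32 * r * Real.exp (-(x - y) ^ 2 / (8 * s)) +
        B * P * r * Real.exp (-(x - y) ^ 2 / (4 * s)) := by
      intro y
      rcases dich y with hy | hy
      · have hsplit : Real.exp (-(x - y) ^ 2 / (4 * s)) ≤
            e32 * Real.exp (-(x - y) ^ 2 / (8 * s)) := by
          have h1 : Real.exp (-(x - y) ^ 2 / (4 * s)) =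
              Real.exp (-(x - y) ^ 2 / (8 * s)) * Real.exp (-(x - y) ^ 2 / (8 * s)) := by
            rw [← Real.exp_add]; congr 1; field_simp; ring
          have h2 : Real.exp (-(x - y) ^ 2 / (8 * s)) ≤ e32 := by
            rw [he32]
            apply Real.exp_le_exp.mpr
            rw [div_le_div_iff₀ (by positivity) (by positivity)]
            nlinarith [hs.le]
          rw [h1]
          exact mul_le_mul_of_nonneg_right h2 (Real.exp_nonneg _)
        have hmain : r * Real.exp (-(x - y) ^ 2 / (4 * s)) * ‖φ₁ y‖ ≤
            r * (e32 * Real.exp (-(x - y) ^ 2 / (8 * s))) * C_N := by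
          apply mul_le_mul (mul_le_mul_of_nonneg_left hsplit hrpos) (hφCN y) (norm_nonneg _)
          positivity
        calc r * Real.exp (-(x - y) ^ 2 / (4 * s)) * ‖φ₁ y‖ ≤
              r * (e32 * Real.exp (-(x - y) ^ 2 / (8 * s))) * C_N := hmain
          _ = C_N * e32 * r * Real.exp (-(x - y) ^ 2 / (8 * s)) := by ring
          _ ≤ _ := le_add_of_nonneg_right (by positivity)
      · calc r * Real.exp (-(x - y) ^ 2 / (4 * s)) * ‖φ₁ y‖ ≤
              r * Real.exp (-(x - y) ^ 2 / (4 * s)) * (B * P) :=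
            mul_le_mul_of_nonneg_left (hφ2 y hy) (by positivity)
          _ = B * P * r * Real.exp (-(x - y) ^ 2 / (4 * s)) := by ring
          _ ≤ _ := le_add_of_nonneg_left (by positivity)
    calc ‖∫ y, (r * Real.exp (-(x - y) ^ 2 / (4 * s))) • φ₁ y‖ ≤
          ∫ y, r * Real.exp (-(x - y) ^ 2 / (4 * s)) * ‖φ₁ y‖ := hIbase
      _ ≤ ∫ y : ℝ, (C_N * e32 * r * Real.exp (-(x - y) ^ 2 / (8 * s)) +
            B * P * r * Real.exp (-(x - y) ^ 2 / (4 * s))) :=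
          integral_mono hcφ_int hFA_int hpt
      _ = C_N * e32 * r * Real.sqrt (Real.pi * (8 * s)) +
            B * P * r * Real.sqrt (Real.pi * (4 * s)) := by
          rw [integral_add ((gauss_int (8 * s) (by positivity)).const_mul _)
            ((gauss_int (4 * s) (by positivity)).const_mul _),
            integral_const_mul, integral_const_mul,
            gauss_val (8 * s) (by positivity), gauss_val (4 * s) (by positivity)]
      _ = C_N * e32 * (r * Real.sqrt (Real.pi * (8 * s))) +
            B * P * (r * Real.sqrt (Real.pi * (4 * s))) := by ring
      _ = Real.sqrt 2 * C_N * e32 + B * P := by rw [hr4, hr8]; ring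
  -- bound B (good for large s)
  have boundB : ‖∫ y, (r * Real.exp (-(x - y) ^ 2 / (4 * s))) • φ₁ y‖ ≤
      r * E * (C_N * Real.pi) + B * P := by
    have hFB_int : Integrable (fun y : ℝ =>
        r * E * ‖φ₁ y‖ + B * P * r * Real.exp (-(x - y) ^ 2 / (4 * s))) :=
      (hφint.norm.const_mul _).add ((gauss_int (4 * s) (by positivity)).const_mul _)
    have hpt : ∀ y : ℝ, r * Real.exp (-(x - y) ^ 2 / (4 * s)) * ‖φ₁ y‖ ≤
        r * E * ‖φ₁ y‖ + B * P * r * Real.exp (-(x - y) ^ 2 / (4 * s)) := by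
      intro y
      rcases dich y with hy | hy
      · have hexp : Real.exp (-(x - y) ^ 2 / (4 * s)) ≤ E := by
          rw [hE]
          apply Real.exp_le_exp.mpr
          rw [div_le_div_iff₀ (by positivity) (by positivity)]
          nlinarith [hs.le]
        calc r * Real.exp (-(x - y) ^ 2 / (4 * s)) * ‖φ₁ y‖ ≤ r * E * ‖φ₁ y‖ :=
              mul_le_mul_of_nonneg_right (mul_le_mul_of_nonneg_left hexp hrpos) (norm_nonneg _)
          _ ≤ _ := le_add_of_nonneg_right (by positivity)
      · calc r * Real.exp (-(x - y) ^ 2 / (4 * s)) * ‖φ₁ y‖ ≤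
              r * Real.exp (-(x - y) ^ 2 / (4 * s)) * (B * P) :=
            mul_le_mul_of_nonneg_left (hφ2 y hy) (by positivity)
          _ = B * P * r * Real.exp (-(x - y) ^ 2 / (4 * s)) := by ring
          _ ≤ _ := le_add_of_nonneg_left (by positivity)
    calc ‖∫ y, (r * Real.exp (-(x - y) ^ 2 / (4 * s))) • φ₁ y‖ ≤
          ∫ y, r * Real.exp (-(x - y) ^ 2 / (4 * s)) * ‖φ₁ y‖ := hIbase
      _ ≤ ∫ y : ℝ, (r * E * ‖φ₁ y‖ + B * P * r * Real.exp (-(x - y) ^ 2 / (4 * s))) :=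
          integral_mono hcφ_int hFB_int hpt
      _ = r * E * (∫ y, ‖φ₁ y‖) + B * P * r * Real.sqrt (Real.pi * (4 * s)) := by
          rw [integral_add (hφint.norm.const_mul _)
            ((gauss_int (4 * s) (by positivity)).const_mul _),
            integral_const_mul, integral_const_mul, gauss_val (4 * s) (by positivity)]
      _ ≤ r * E * (C_N * Real.pi) + B * P * r * Real.sqrt (Real.pi * (4 * s)) := by
          have := mul_le_mul_of_nonneg_left hφnorm (by positivity : (0:ℝ) ≤ r * E)
          linarith
      _ = r * E * (C_N * Real.pi) + B * P * (r * Real.sqrt (Real.pi * (4 * s))) := by ring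
      _ = r * E * (C_N * Real.pi) + B * P := by rw [hr4]; ring
  -- final arithmetic
  have hsq1 : 0 < Real.sqrt (1 + s ^ 2) := Real.sqrt_pos.mpr (by positivity)
  have hnn : 0 ≤ ‖∫ y, (r * Real.exp (-(x - y) ^ 2 / (4 * s))) • φ₁ y‖ := norm_nonneg _
  set u : ℝ := ‖∫ y, (r * Real.exp (-(x - y) ^ 2 / (4 * s))) • φ₁ y‖ with hu
  clear_value u r M B P E
  clear hu hIbase hcφ_int hexp_meas hnorm_eq hφ2 dich gauss_int gauss_val hr8 hr4 hφnorm hφint hint1 hbound hφCN hφ hmeas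
  have hPP : P ^ 2 ≤ P := by nlinarith
  rcases le_or_gt s 1 with hs1 | hs1
  · -- small s: use boundA
    have hsqrt_le : Real.sqrt (1 + s ^ 2) ≤ 2 := by
      have h1 : (1 : ℝ) + s ^ 2 ≤ 2 ^ 2 := by nlinarith
      calc Real.sqrt (1 + s ^ 2) ≤ Real.sqrt (2 ^ 2) := Real.sqrt_le_sqrt h1
        _ = 2 := Real.sqrt_sq (by norm_num)
    set e32 : ℝ := Real.exp (-x ^ 2 / (32 * s)) with he32
    have he32sq : e32 ^ 2 = E := by
      rw [he32, hE, ← Real.exp_nat_mul]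
      congr 1; field_simp; ring
    have hsq : u ^ 2 ≤
        (Real.sqrt 2 * C_N * e32 + B * P) ^ 2 := by
      apply pow_le_pow_left₀ hnn boundA
    have hsq2 : (Real.sqrt 2 * C_N * e32 + B * P) ^ 2 ≤
        2 * (Real.sqrt 2 * C_N * e32) ^ 2 + 2 * (B * P) ^ 2 := two_sq _ _
    have h2 : (Real.sqrt 2 : ℝ) ^ 2 = 2 := Real.sq_sqrt (by norm_num)
    have hterm1 : 2 * (Real.sqrt 2 * C_N * e32) ^ 2 ≤ 8 * C_N ^ 2 * (E / Real.sqrt (1 + s ^ 2)) := by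
      have h3 : 2 * (Real.sqrt 2 * C_N * e32) ^ 2 = 4 * C_N ^ 2 * E := by
        rw [show (Real.sqrt 2 * C_N * e32) ^ 2 = (Real.sqrt 2) ^ 2 * C_N ^ 2 * e32 ^ 2 by ring,
          h2, he32sq]; ring
      rw [h3]
      have hEdiv : E ≤ 2 * (E / Real.sqrt (1 + s ^ 2)) := by
        rw [mul_div_assoc', le_div_iff₀ hsq1]
        nlinarith [hE0.le]
      nlinarith [sq_nonneg C_N]
    have hterm2 : 2 * (B * P) ^ 2 ≤ 2 * B ^ 2 * P := by
      have : (B * P) ^ 2 = B ^ 2 * P ^ 2 := by ring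
      rw [this]
      clear * - hP0 hP1 hB0
      have hPP2 : P ^ 2 ≤ P := by nlinarith
      nlinarith [mul_le_mul_of_nonneg_left hPP2 (sq_nonneg B)]
    have hfin1 : 0 ≤ E / Real.sqrt (1 + s ^ 2) := by positivity
    have hcomb : u ^ 2 ≤
        8 * C_N ^ 2 * (E / Real.sqrt (1 + s ^ 2)) + 2 * B ^ 2 * P := by
      linarith [hsq, hsq2, hterm1, hterm2]
    refine hcomb.trans ?_
    clear * - hP0 hfin1 hC hB0
    nlinarith [mul_nonneg (sq_nonneg C_N) hP0, mul_nonneg (sq_nonneg B) hfin1, hfin1, hP0]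
  · -- large s: use boundB
    have hsqrt_le : Real.sqrt (1 + s ^ 2) ≤ 2 * s := by
      have h1 : (1 : ℝ) + s ^ 2 ≤ (2 * s) ^ 2 := by nlinarith
      calc Real.sqrt (1 + s ^ 2) ≤ Real.sqrt ((2 * s) ^ 2) := Real.sqrt_le_sqrt h1
        _ = 2 * s := Real.sqrt_sq (by linarith)
    have hr2 : r ^ 2 = (4 * Real.pi * s)⁻¹ := by
      rw [hr, inv_pow, Real.sq_sqrt h4s.le]
    have hsq : u ^ 2 ≤
        (r * E * (C_N * Real.pi) + B * P) ^ 2 := by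
      apply pow_le_pow_left₀ hnn boundB
    have hsq2 : (r * E * (C_N * Real.pi) + B * P) ^ 2 ≤
        2 * (r * E * (C_N * Real.pi)) ^ 2 + 2 * (B * P) ^ 2 := two_sq _ _
    have hterm1 : 2 * (r * E * (C_N * Real.pi)) ^ 2 ≤
        8 * C_N ^ 2 * (E / Real.sqrt (1 + s ^ 2)) := by
      have hd : E / (2 * s) ≤ E / Real.sqrt (1 + s ^ 2) := by
        gcongr
      have h3 : 2 * (r * E * (C_N * Real.pi)) ^ 2 =
          2 * (4 * Real.pi * s)⁻¹ * E ^ 2 * C_N ^ 2 * Real.pi ^ 2 := by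
        rw [show (r * E * (C_N * Real.pi)) ^ 2 = r ^ 2 * E ^ 2 * C_N ^ 2 * Real.pi ^ 2 by ring,
          hr2]; ring
      have h4 : 2 * (4 * Real.pi * s)⁻¹ * E ^ 2 * C_N ^ 2 * Real.pi ^ 2 ≤
          8 * C_N ^ 2 * (E / (2 * s)) := by
        have hl : 2 * (4 * Real.pi * s)⁻¹ * E ^ 2 * C_N ^ 2 * Real.pi ^ 2 =
            (E ^ 2 * C_N ^ 2 * Real.pi / 2) * s⁻¹ := by
          field_simp; ring
        have hrr : 8 * C_N ^ 2 * (E / (2 * s)) = (4 * C_N ^ 2 * E) * s⁻¹ := by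
          field_simp; ring
        rw [hl, hrr]
        apply mul_le_mul_of_nonneg_right ?_ (inv_nonneg.mpr hs.le)
        clear * - hE0 hE1 hC pi_pos
        have hEE : E ^ 2 ≤ E := by nlinarith
        nlinarith [Real.pi_le_four, mul_le_mul_of_nonneg_left hEE
          (by positivity : (0:ℝ) ≤ C_N ^ 2 * Real.pi),
          mul_nonneg (sq_nonneg C_N) hE0.le]
      calc 2 * (r * E * (C_N * Real.pi)) ^ 2 = _ := h3
        _ ≤ 8 * C_N ^ 2 * (E / (2 * s)) := h4
        _ ≤ 8 * C_N ^ 2 * (E / Real.sqrt (1 + s ^ 2)) := by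
            apply mul_le_mul_of_nonneg_left hd (by positivity)
    have hterm2 : 2 * (B * P) ^ 2 ≤ 2 * B ^ 2 * P := by
      have : (B * P) ^ 2 = B ^ 2 * P ^ 2 := by ring
      rw [this]
      clear * - hP0 hP1 hB0
      have hPP2 : P ^ 2 ≤ P := by nlinarith
      nlinarith [mul_le_mul_of_nonneg_left hPP2 (sq_nonneg B)]
    have hfin1 : 0 ≤ E / Real.sqrt (1 + s ^ 2) := by positivity
    have hcomb : u ^ 2 ≤
        8 * C_N ^ 2 * (E / Real.sqrt (1 + s ^ 2)) + 2 * B ^ 2 * P := by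
      linarith [hsq, hsq2, hterm1, hterm2]
    refine hcomb.trans ?_
    clear * - hP0 hfin1 hC hB0
    nlinarith [mul_nonneg (sq_nonneg C_N) hP0, mul_nonneg (sq_nonneg B) hfin1, hfin1, hP0]
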